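/- Let U and Z be compact metric spaces, let ρ be a finite Borel measure on U with supp(ρ) = U, let W : U×Z → ℝ be continuous, and for β > 0 let W_β : U×Z → ℝ be measurable functions converging uniformly to W as β → +∞. Then the functions z ↦ (1/β) log ∫_U e^{βW_β(u,z)} dρ(u) converge uniformly on Z, as β → +∞, to the function z ↦ sup_{u∈U} W(u,z). -/

import Mathlib

open MeasureTheory Filter

theorem stmt19
    {U Z : Type*}
    [MetricSpace U] [CompactSpace U] [MeasurableSpace U] [BorelSpace U]
    [MetricSpace Z] [CompactSpace Z] [MeasurableSpace Z] [BorelSpace Z]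
    (ρ : Measure U) [IsFiniteMeasure ρ] [ρ.IsOpenPosMeasure]
    (W : U × Z → ℝ) (hW : Continuous W)
    (WF : ℝ → U × Z → ℝ)
    (hWFm : ∀ β : ℝ, Measurable (WF β))
    (hWF : TendstoUniformly WF W atTop) :
    TendstoUniformly
      (fun (β : ℝ) (z : Z) => β⁻¹ * Real.log (∫ u, Real.exp (β * WF β (u, z)) ∂ρ))
      (fun z => ⨆ u : U, W (u, z)) atTop := by
  rcases isEmpty_or_nonempty U with hUe | hU
  · have h1 : (fun (β : ℝ) (z : Z) => β⁻¹ * Real.log (∫ u, Real.exp (β * WF β (u, z)) ∂ρ))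
        = fun _ _ => (0 : ℝ) := by
      funext β z
      rw [Measure.eq_zero_of_isEmpty ρ]
      simp
    have h2 : (fun z : Z => ⨆ u : U, W (u, z)) = fun _ => (0 : ℝ) := by
      funext z
      exact Real.iSup_of_isEmpty _
    rw [h1, h2]
    exact fun u hu => Eventually.of_forall fun β x => refl_mem_uniformity hu
  rcases isEmpty_or_nonempty Z with hZe | hZ
  · rw [Metric.tendstoUniformly_iff]
    intro ε hε
    filter_upwards with β z
    exact (hZe.false z).elim
  rw [Metric.tendstoUniformly_iff]
  intro ε hε
  set ε' := ε / 4 with hε'def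
  have hε' : 0 < ε' := by positivity
  -- uniform continuity of W on U × Z
  have hWu : UniformContinuous W := CompactSpace.uniformContinuous_of_continuous hW
  obtain ⟨δ₀, hδ₀, hδW⟩ := Metric.uniformContinuous_iff.1 hWu ε' hε'
  -- finite subcover by small balls, giving a uniform lower bound on ball measures
  obtain ⟨t, ht⟩ := isCompact_univ.elim_finite_subcover
      (fun u : U => Metric.ball u (δ₀ / 2)) (fun u => Metric.isOpen_ball)
      (fun x _ => Set.mem_iUnion.2 ⟨x, Metric.mem_ball_self (by linarith)⟩)
  have htne : t.Nonempty := by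
    obtain ⟨i, hi, -⟩ := Set.mem_iUnion₂.1 (ht (Set.mem_univ hU.some))
    exact ⟨i, hi⟩
  set c := t.inf' htne (fun i => (ρ (Metric.ball i (δ₀ / 2))).toReal) with hc
  have hcpos : 0 < c := by
    rw [hc, Finset.lt_inf'_iff]
    intro i _
    exact ENNReal.toReal_pos
      ((Metric.isOpen_ball.measure_pos ρ (Metric.nonempty_ball.2 (by linarith))).ne')
      (measure_ne_top ρ _)
  have hcball : ∀ u : U, c ≤ (ρ (Metric.ball u δ₀)).toReal := by
    intro u
    obtain ⟨i, hi, hui⟩ := Set.mem_iUnion₂.1 (ht (Set.mem_univ u))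
    have hsub : Metric.ball i (δ₀ / 2) ⊆ Metric.ball u δ₀ := by
      intro x hx
      have h1 := Metric.mem_ball.1 hx
      have h2 := Metric.mem_ball.1 hui
      rw [Metric.mem_ball]
      have h3 : dist x u ≤ dist x i + dist u i := by
        rw [dist_comm u i]; exact dist_triangle _ _ _
      linarith
    exact le_trans (Finset.inf'_le _ hi)
      (ENNReal.toReal_mono (measure_ne_top ρ _) (measure_mono hsub))
  -- bound on W
  obtain ⟨p₀, -, hCb⟩ := isCompact_univ.exists_isMaxOn Set.univ_nonempty
      ((continuous_abs.comp hW).continuousOn)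
  set C := |W p₀| with hCdef
  have hWbd : ∀ p : U × Z, |W p| ≤ C := fun p => hCb (Set.mem_univ p)
  -- positive total measure
  set rU := (ρ (Set.univ : Set U)).toReal with hrU
  have hrUpos : 0 < rU :=
    ENNReal.toReal_pos ((isOpen_univ.measure_pos ρ Set.univ_nonempty).ne') (measure_ne_top ρ _)
  set B := max 1 (max (|Real.log rU| / ε') (|Real.log c| / ε')) with hB
  have hev1 := Metric.tendstoUniformly_iff.1 hWF ε' hε'
  filter_upwards [hev1, eventually_ge_atTop B] with β hβclose hβB z
  have hβ1 : (1 : ℝ) ≤ β := le_trans (le_max_left _ _) hβB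
  have hβpos : 0 < β := lt_of_lt_of_le one_pos hβ1
  have hlog1 : β⁻¹ * |Real.log rU| ≤ ε' := by
    have h := le_trans (le_trans (le_max_left _ _) (le_max_right 1 _)) hβB
    rw [div_le_iff₀ hε'] at h
    rw [inv_mul_le_iff₀ hβpos]
    exact h
  have hlog2 : β⁻¹ * |Real.log c| ≤ ε' := by
    have h := le_trans (le_trans (le_max_right _ _) (le_max_right 1 _)) hβB
    rw [div_le_iff₀ hε'] at h
    rw [inv_mul_le_iff₀ hβpos]
    exact h
  set M := ⨆ u : U, W (u, z) with hM
  obtain ⟨u₀, -, hu₀⟩ := isCompact_univ.exists_isMaxOn Set.univ_nonempty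
      (Continuous.continuousOn (s := Set.univ)
        (show Continuous fun u : U => W (u, z) from
          hW.comp (continuous_id.prodMk continuous_const)))
  have hbdd : BddAbove (Set.range fun u : U => W (u, z)) :=
    ⟨W (u₀, z), by rintro y ⟨u, rfl⟩; exact hu₀ (Set.mem_univ u)⟩
  have hMle : M ≤ W (u₀, z) := ciSup_le fun u => hu₀ (Set.mem_univ u)
  have hleM : ∀ u : U, W (u, z) ≤ M := fun u => le_ciSup hbdd u
  set f : U → ℝ := fun u => Real.exp (β * WF β (u, z)) with hfdef
  have hfm : Measurable f :=
    Real.measurable_exp.comp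
      (measurable_const.mul ((hWFm β).comp (measurable_id.prodMk measurable_const)))
  have hWFb : ∀ u : U, |WF β (u, z)| ≤ C + ε' := by
    intro u
    have h := hβclose (u, z)
    rw [Real.dist_eq] at h
    have h2 := hWbd (u, z)
    have h3 : |WF β (u, z)| - |W (u, z)| ≤ |WF β (u, z) - W (u, z)| :=
      abs_sub_abs_le_abs_sub _ _
    rw [abs_sub_comm] at h3
    linarith
  have hfint : Integrable f ρ := by
    refine ⟨hfm.aestronglyMeasurable, ?_⟩
    apply HasFiniteIntegral.of_bounded (C := Real.exp (β * (C + ε')))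
    filter_upwards with u
    rw [Real.norm_eq_abs, abs_of_pos (Real.exp_pos _)]
    exact Real.exp_le_exp.2
      (mul_le_mul_of_nonneg_left (le_trans (le_abs_self _) (hWFb u)) hβpos.le)
  have hfub : ∀ u : U, f u ≤ Real.exp (β * (M + ε')) := by
    intro u
    have h := hβclose (u, z)
    rw [Real.dist_eq] at h
    have h2 := hleM u
    have ha := abs_lt.1 h
    apply Real.exp_le_exp.2
    apply mul_le_mul_of_nonneg_left _ hβpos.le
    linarith
  have hIub : (∫ u, f u ∂ρ) ≤ rU * Real.exp (β * (M + ε')) := by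
    calc (∫ u, f u ∂ρ) ≤ ∫ _u, Real.exp (β * (M + ε')) ∂ρ :=
          integral_mono hfint (integrable_const _) hfub
      _ = rU * Real.exp (β * (M + ε')) := by rw [integral_const]; simp [hrU, smul_eq_mul, Measure.real]
  have hflb : ∀ u ∈ Metric.ball u₀ δ₀, Real.exp (β * (M - 2 * ε')) ≤ f u := by
    intro u hu
    have hd : dist (u, z) (u₀, z) < δ₀ := by
      rw [Prod.dist_eq]
      have := Metric.mem_ball.1 hu
      simp only [dist_self]
      exact max_lt this hδ₀
    have h1 := hδW hd
    rw [Real.dist_eq] at h1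
    have h2 := hβclose (u, z)
    rw [Real.dist_eq] at h2
    have ha := abs_lt.1 h1
    have hb := abs_lt.1 h2
    apply Real.exp_le_exp.2
    apply mul_le_mul_of_nonneg_left _ hβpos.le
    linarith
  have hIlb : Real.exp (β * (M - 2 * ε')) * c ≤ ∫ u, f u ∂ρ := by
    have h1 : Real.exp (β * (M - 2 * ε')) * c
        ≤ Real.exp (β * (M - 2 * ε')) * (ρ (Metric.ball u₀ δ₀)).toReal :=
      mul_le_mul_of_nonneg_left (hcball u₀) (Real.exp_pos _).le
    have h2 : Real.exp (β * (M - 2 * ε')) * (ρ (Metric.ball u₀ δ₀)).toReal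
        ≤ ∫ u in Metric.ball u₀ δ₀, f u ∂ρ := by
      rw [mul_comm]
      calc (ρ (Metric.ball u₀ δ₀)).toReal * Real.exp (β * (M - 2 * ε'))
          = ∫ _u in Metric.ball u₀ δ₀, Real.exp (β * (M - 2 * ε')) ∂ρ := by
            rw [setIntegral_const]; simp [smul_eq_mul, Measure.real]
        _ ≤ ∫ u in Metric.ball u₀ δ₀, f u ∂ρ :=
            setIntegral_mono_on (integrableOn_const (measure_lt_top ρ _).ne)
              hfint.integrableOn measurableSet_ball hflb
    have h3 : (∫ u in Metric.ball u₀ δ₀, f u ∂ρ) ≤ ∫ u, f u ∂ρ :=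
      setIntegral_le_integral hfint (Eventually.of_forall fun u => (Real.exp_pos _).le)
    linarith
  have hIpos : 0 < ∫ u, f u ∂ρ := lt_of_lt_of_le (by positivity) hIlb
  have hlogub : Real.log (∫ u, f u ∂ρ) ≤ Real.log rU + β * (M + ε') := by
    calc Real.log (∫ u, f u ∂ρ) ≤ Real.log (rU * Real.exp (β * (M + ε'))) :=
          Real.log_le_log hIpos hIub
      _ = Real.log rU + β * (M + ε') := by
          rw [Real.log_mul hrUpos.ne' (Real.exp_ne_zero _), Real.log_exp]
  have hloglb : β * (M - 2 * ε') + Real.log c ≤ Real.log (∫ u, f u ∂ρ) := by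
    have h := Real.log_le_log (by positivity) hIlb
    rwa [Real.log_mul (Real.exp_ne_zero _) hcpos.ne', Real.log_exp] at h
  have hXub : β⁻¹ * Real.log (∫ u, f u ∂ρ) ≤ β⁻¹ * Real.log rU + (M + ε') := by
    have h := mul_le_mul_of_nonneg_left hlogub (inv_nonneg.2 hβpos.le)
    have hinv : β⁻¹ * (β * (M + ε')) = M + ε' := by field_simp
    calc β⁻¹ * Real.log (∫ u, f u ∂ρ) ≤ β⁻¹ * (Real.log rU + β * (M + ε')) := h
      _ = β⁻¹ * Real.log rU + (M + ε') := by rw [mul_add, hinv]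
  have hXlb : (M - 2 * ε') + β⁻¹ * Real.log c ≤ β⁻¹ * Real.log (∫ u, f u ∂ρ) := by
    have h := mul_le_mul_of_nonneg_left hloglb (inv_nonneg.2 hβpos.le)
    have hinv : β⁻¹ * (β * (M - 2 * ε')) = M - 2 * ε' := by field_simp
    calc (M - 2 * ε') + β⁻¹ * Real.log c = β⁻¹ * (β * (M - 2 * ε') + Real.log c) := by
          rw [mul_add, hinv]
      _ ≤ β⁻¹ * Real.log (∫ u, f u ∂ρ) := h
  have b1 : β⁻¹ * Real.log rU ≤ ε' :=
    le_trans (mul_le_mul_of_nonneg_left (le_abs_self _) (inv_nonneg.2 hβpos.le)) hlog1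
  have b2 : -ε' ≤ β⁻¹ * Real.log c := by
    have h := mul_le_mul_of_nonneg_left (neg_abs_le (Real.log c)) (inv_nonneg.2 hβpos.le)
    have h2 : β⁻¹ * -|Real.log c| = -(β⁻¹ * |Real.log c|) := by ring
    rw [h2] at h
    linarith
  rw [Real.dist_eq, abs_lt]
  constructor
  · linarith
  · linarith
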